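/- arXiv:2605.12378 — 2 statements merged into one kernel-verified Lean document; each statement's English description precedes it below -/
import Mathlib

section
/- Let φ = C₁ ∧ ⋯ ∧ C_m be any CNF formula over variables X. Define Z(φ) as the CNF obtained by adding fresh variables y₁,…,y_m and z₁,…,z_{m+1}, consisting of the clauses (C_i ∨ y_i) for each i, the clauses (¬λ ∨ ¬z_i ∨ z_{i+1}) for each i and each literal λ ∈ C_i ∪ {y_i}, the unit clause z₁, and the unit clause ¬z_{m+1}. Then Z(φ) is unsatisfiable. -/
/-- Variables of `Z(φ)`: original variables `X`, control variables `y_i` (i ∈ [m]),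
and chain variables `z_j` (j ∈ [m+1]). -/
abbrev ZVar (X : Type) (m : ℕ) := X ⊕ (Fin m ⊕ Fin (m + 1))

def yVar {X : Type} {m : ℕ} (i : Fin m) : ZVar X m := Sum.inr (Sum.inl i)
def zVar {X : Type} {m : ℕ} (j : Fin (m + 1)) : ZVar X m := Sum.inr (Sum.inr j)

/-- Evaluation of a literal (variable together with a polarity). -/
def evalLit {V : Type} (I : V → Bool) (l : V × Bool) : Bool :=
  if l.2 then I l.1 else !(I l.1)

/-- An assignment satisfies a clause (list of literals) if some literal is true. -/
def satClause {V : Type} (I : V → Bool) (C : List (V × Bool)) : Prop :=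
  ∃ l ∈ C, evalLit I l = true

/-- Lift a clause over `X` to a clause over `ZVar X m`. -/
def liftClause {X : Type} {m : ℕ} (C : List (X × Bool)) : List (ZVar X m × Bool) :=
  C.map (fun l => (Sum.inl l.1, l.2))

/-- The clauses of `Z(φ)`: `(C_i ∨ y_i)` for each `i`; `(¬λ ∨ ¬z_i ∨ z_{i+1})` for
each `i` and each literal `λ ∈ C_i ∪ {y_i}`; the unit clauses `z₁` and `¬z_{m+1}`. -/
def zClauses {X : Type} {m : ℕ} (φ : Fin m → List (X × Bool)) :
    List (List (ZVar X m × Bool)) :=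
  ((List.finRange m).map (fun i => liftClause (φ i) ++ [(yVar i, true)]))
  ++ ((List.finRange m).flatMap (fun i =>
        (liftClause (φ i) ++ [(yVar i, true)]).map (fun (l : ZVar X m × Bool) =>
          [(l.1, !l.2), (zVar i.castSucc, false), (zVar i.succ, true)])))
  ++ [[(zVar (0 : Fin (m + 1)), true)], [(zVar (Fin.last m), false)]]

/-- `Z(φ)` is unsatisfiable, for any CNF `φ = C₁ ∧ ⋯ ∧ C_m` over `X`. -/
theorem zClauses_unsat {X : Type} {m : ℕ} (φ : Fin m → List (X × Bool)) :
    ¬ ∃ I : ZVar X m → Bool, ∀ C ∈ zClauses φ, satClause I C := by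
  rintro ⟨I, hI⟩
  -- unit clauses
  have hz0 : I (zVar (0 : Fin (m + 1))) = true := by
    have := hI [(zVar (0 : Fin (m + 1)), true)] (by simp [zClauses])
    rcases this with ⟨l, hl, hev⟩
    simp at hl
    subst hl
    simpa [evalLit] using hev
  have hzlast : I (zVar (Fin.last m)) = false := by
    have := hI [(zVar (Fin.last m), false)] (by simp [zClauses])
    rcases this with ⟨l, hl, hev⟩
    simp at hl
    subst hl
    simpa [evalLit] using hev
  -- chain: all z_j are true
  have hall : ∀ j : Fin (m + 1), I (zVar j) = true := by
    intro j
    induction j using Fin.induction with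
    | zero => exact hz0
    | succ i ih =>
      -- get a true literal of C_i ∨ y_i
      have hCi : satClause I (liftClause (φ i) ++ [(yVar i, true)]) := by
        apply hI
        simp [zClauses]
        exact Or.inl ⟨i, rfl, rfl⟩
      rcases hCi with ⟨l, hl, hev⟩
      -- the implication clause for l
      have himp : satClause I [(l.1, !l.2), (zVar i.castSucc, false), (zVar i.succ, true)] := by
        apply hI
        simp only [zClauses, List.mem_append, List.mem_flatMap, List.mem_map]
        exact Or.inl (Or.inr ⟨i, List.mem_finRange i, l, by simpa using hl, rfl⟩)
      rcases himp with ⟨l', hl', hev'⟩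
      simp only [List.mem_cons, List.mem_singleton, List.not_mem_nil, or_false] at hl'
      rcases hl' with h | h | h
      · subst h
        exfalso
        rcases l with ⟨v, b⟩
        cases b <;> simp_all [evalLit]
      · subst h
        exfalso
        simp [evalLit, ih] at hev'
      · subst h
        simpa [evalLit] using hev'
  have := hall (Fin.last m)
  rw [hzlast] at this
  exact Bool.false_ne_true this
end

section
/- Let φ be a CNF whose primal graph has treewidth w. Then the primal graph of the CNF C(φ) = ⋀_{i∈[m]} (C_i ∨ y_i), obtained by adding a fresh control variable y_i to each clause, has treewidth at most w + 1, provided every clause of φ has at least one literal. -/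
/-- `G` has a tree decomposition of width at most `w`. -/
def HasTreewidthAtMost {V : Type} (G : SimpleGraph V) (w : ℕ) : Prop :=
  ∃ (ι : Type) (Tg : SimpleGraph ι) (β : ι → Finset V),
    Tg.IsTree ∧
    (∀ v : V, ∃ t, v ∈ β t) ∧
    (∀ u v : V, G.Adj u v → ∃ t, u ∈ β t ∧ v ∈ β t) ∧
    (∀ v : V, (Tg.induce {t | v ∈ β t}).Connected) ∧
    (∀ t, (β t).card ≤ w + 1)

/-- The primal graph of the CNF with clause variable sets `cl i`. -/
def primalGraph {X : Type} {m : ℕ} (cl : Fin m → Finset X) : SimpleGraph X where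
  Adj a b := a ≠ b ∧ ∃ i, a ∈ cl i ∧ b ∈ cl i
  symm := by constructor; rintro a b ⟨hab, i, ha, hb⟩; exact ⟨hab.symm, i, hb, ha⟩
  loopless := by constructor; rintro a ⟨haa, -⟩; exact haa rfl

/-- Membership of a variable of `C(φ)` in the `i`-th clause `C_i ∨ y_i`. -/
def memCClause {X : Type} {m : ℕ} (cl : Fin m → Finset X) (i : Fin m) :
    X ⊕ Fin m → Prop
  | .inl a => a ∈ cl i
  | .inr j => j = i

/-- The primal graph of `C(φ) = ⋀ᵢ (Cᵢ ∨ yᵢ)`, over the variables `X ⊕ Fin m`. -/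
def primalGraphC {X : Type} {m : ℕ} (cl : Fin m → Finset X) :
    SimpleGraph (X ⊕ Fin m) where
  Adj p q := p ≠ q ∧ ∃ i, memCClause cl i p ∧ memCClause cl i q
  symm := by constructor; rintro p q ⟨hpq, i, hp, hq⟩; exact ⟨hpq.symm, i, hq, hp⟩
  loopless := by constructor; rintro p ⟨hpp, -⟩; exact hpp rfl


section TW
open SimpleGraph

section Helpers
variable {V : Type} {G : SimpleGraph V}

lemma walk_of_induce_reachable {S : Set V} {x y : S}
    (h : (G.induce S).Reachable x y) :
    ∃ w : G.Walk x.1 y.1, ∀ v ∈ w.support, v ∈ S := by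
  obtain ⟨p⟩ := h
  refine ⟨p.map (SimpleGraph.Embedding.induce S).toHom, ?_⟩
  intro v hv
  change v ∈ (p.map (SimpleGraph.Embedding.induce S).toHom).support at hv
  rw [Walk.support_map] at hv
  obtain ⟨u, _, rfl⟩ := List.mem_map.1 hv
  exact u.2

lemma reachable_induce_of_walk {S : Set V} {x y : V} (w : G.Walk x y)
    (hw : ∀ v ∈ w.support, v ∈ S) :
    (G.induce S).Reachable ⟨x, hw x w.start_mem_support⟩ ⟨y, hw y w.end_mem_support⟩ := by
  induction w with
  | nil => rfl
  | @cons a b c h p ih =>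
    have hb : ∀ v ∈ p.support, v ∈ S := fun v hv => hw v (by simp [hv])
    have h1 : (G.induce S).Adj ⟨a, hw a (Walk.start_mem_support _)⟩ ⟨b, hb b p.start_mem_support⟩ := h
    exact h1.reachable.trans (ih hb)

lemma gate_mem (hG : G.IsAcyclic) {t1 t1' u : V} (h : G.Adj t1 t1')
    (q0 : G.Walk t1' u) (hq0 : t1 ∉ q0.support) (p : G.Walk t1 u) (hp : p.IsPath) :
    t1' ∈ p.support := by
  classical
  have hq : (Walk.cons h q0.bypass).IsPath := by
    rw [Walk.cons_isPath_iff]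
    exact ⟨q0.bypass_isPath, fun hc => hq0 (q0.support_bypass_subset hc)⟩
  have := hG.path_unique ⟨p, hp⟩ ⟨Walk.cons h q0.bypass, hq⟩
  have hps : p = Walk.cons h q0.bypass := congrArg Subtype.val this
  rw [hps]
  simp

end Helpers

section Helly
variable {ι X : Type}

lemma helly_step (Tg : SimpleGraph ι) (hT : Tg.IsAcyclic) (β : ι → Finset X)
    (hconn : ∀ v : X, (Tg.induce {t | v ∈ β t}).Connected)
    (s : Finset X) (a : X)
    (hpair : ∀ b ∈ s, ∃ u, a ∈ β u ∧ b ∈ β u) :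
    ∀ {t1 t2 : ι} (p : Tg.Walk t1 t2), p.IsPath → (∀ b ∈ s, b ∈ β t1) → a ∈ β t2 →
      ∃ t, a ∈ β t ∧ ∀ b ∈ s, b ∈ β t := by
  intro t1 t2 p
  induction p with
  | nil => exact fun _ h1 h2 => ⟨_, h2, h1⟩
  | @cons t1 t1' t2 h q ih =>
    intro hp hs ha2
    by_cases hat1 : a ∈ β t1
    · exact ⟨t1, hat1, hs⟩
    have key : ∀ b ∈ s, b ∈ β t1' := by
      intro b hb
      obtain ⟨u, hau, hbu⟩ := hpair b hb
      have hreach := (hconn a).preconnected ⟨t2, ha2⟩ ⟨u, hau⟩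
      obtain ⟨W2, hW2⟩ := walk_of_induce_reachable hreach
      have hreachb := (hconn b).preconnected ⟨t1, hs b hb⟩ ⟨u, hbu⟩
      obtain ⟨W1, hW1⟩ := walk_of_induce_reachable hreachb
      have hq0 : t1 ∉ (q.append W2).support := by
        rw [Walk.mem_support_append_iff]
        rintro (hc | hc)
        · exact ((Walk.cons_isPath_iff h q).1 hp).2 hc
        · exact hat1 (hW2 t1 hc)
      classical
      have hgate := gate_mem hT h (q.append W2) hq0 W1.bypass W1.bypass_isPath
      exact hW1 _ (W1.support_bypass_subset hgate)
    exact ih (Walk.IsPath.of_cons hp) key ha2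

lemma clique_bag (Tg : SimpleGraph ι) (hT : Tg.IsTree) (β : ι → Finset X)
    (hconn : ∀ v : X, (Tg.induce {t | v ∈ β t}).Connected)
    (s : Finset X) (hclq : ∀ a ∈ s, ∀ b ∈ s, ∃ u, a ∈ β u ∧ b ∈ β u) :
    ∃ t, ∀ b ∈ s, b ∈ β t := by
  classical
  induction s using Finset.induction with
  | empty =>
    obtain ⟨t⟩ := hT.isConnected.nonempty
    exact ⟨t, by simp⟩
  | @insert a s ha ih =>
    obtain ⟨t1, ht1⟩ := ih (fun x hx y hy =>
      hclq x (Finset.mem_insert_of_mem hx) y (Finset.mem_insert_of_mem hy))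
    obtain ⟨t2, hat2, _⟩ := hclq a (Finset.mem_insert_self a s) a (Finset.mem_insert_self a s)
    obtain ⟨p, hp, -⟩ := hT.existsUnique_path t1 t2
    obtain ⟨t, hat, hst⟩ := helly_step Tg hT.IsAcyclic β hconn s a
      (fun b hb => hclq a (Finset.mem_insert_self a s) b (Finset.mem_insert_of_mem hb))
      p hp ht1 hat2
    refine ⟨t, fun b hb => ?_⟩
    rcases Finset.mem_insert.1 hb with rfl | hb
    · exact hat
    · exact hst b hb

end Helly

section Attach
variable {ι W : Type}

def attachLeaves (Tg : SimpleGraph ι) (f : W → ι) : SimpleGraph (ι ⊕ W) where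
  Adj p q := match p, q with
    | .inl t, .inl t' => Tg.Adj t t'
    | .inl t, .inr i => t = f i
    | .inr i, .inl t => t = f i
    | .inr _, .inr _ => False
  symm := by constructor; rintro (t | i) (t' | j) h <;> simp_all <;> exact h.symm
  loopless := by constructor; rintro (t | i) h <;> simp_all <;> exact h.ne rfl

variable {Tg : SimpleGraph ι} {f : W → ι}

@[simp] lemma attachLeaves_adj_inl_inl {t t' : ι} :
    (attachLeaves Tg f).Adj (Sum.inl t) (Sum.inl t') ↔ Tg.Adj t t' := Iff.rfl

@[simp] lemma attachLeaves_adj_inl_inr {t : ι} {i : W} :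
    (attachLeaves Tg f).Adj (Sum.inl t) (Sum.inr i) ↔ t = f i := Iff.rfl

@[simp] lemma attachLeaves_adj_inr_inl {t : ι} {i : W} :
    (attachLeaves Tg f).Adj (Sum.inr i) (Sum.inl t) ↔ t = f i := Iff.rfl

@[simp] lemma attachLeaves_adj_inr_inr {i j : W} :
    ¬ (attachLeaves Tg f).Adj (Sum.inr i) (Sum.inr j) := fun h => h

def inlHom (Tg : SimpleGraph ι) (f : W → ι) : Tg →g attachLeaves Tg f :=
  ⟨Sum.inl, fun h => h⟩

lemma exists_lower {p q : ι ⊕ W} (w : (attachLeaves Tg f).Walk p q)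
    (hw : ∀ v ∈ w.support, ∃ t, v = Sum.inl t) :
    ∃ (x y : ι) (hx : p = Sum.inl x) (hy : q = Sum.inl y) (w' : Tg.Walk x y),
      w'.map (inlHom Tg f) = w.copy hx hy := by
  induction w with
  | @nil p =>
    obtain ⟨x, rfl⟩ := hw p (Walk.start_mem_support _)
    exact ⟨x, x, rfl, rfl, Walk.nil, by simp; rfl⟩
  | @cons p r q h w ih =>
    obtain ⟨x, rfl⟩ := hw p (Walk.start_mem_support _)
    obtain ⟨z, y, hz, hy, w', hmap⟩ := ih (fun v hv => hw v (by simp [hv]))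
    subst hz; subst hy
    refine ⟨x, y, rfl, rfl, Walk.cons h w', ?_⟩
    exact congrArg (Walk.cons h) (hmap.trans (Walk.copy_rfl_rfl w))

lemma attachLeaves_isTree (hT : Tg.IsTree) : (attachLeaves Tg f).IsTree := by
  constructor
  · -- connected
    have hbase : ∀ t t' : ι, (attachLeaves Tg f).Reachable (Sum.inl t) (Sum.inl t') :=
      fun t t' => (hT.isConnected.preconnected t t').map (inlHom Tg f)
    obtain ⟨t0⟩ := hT.isConnected.nonempty
    haveI : Nonempty (ι ⊕ W) := ⟨Sum.inl t0⟩
    refine ⟨?_⟩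
    rintro (t | i) (t' | j)
    · exact hbase t t'
    · exact (hbase t (f j)).trans (Adj.reachable (by simp))
    · exact (Adj.reachable (by simp : (attachLeaves Tg f).Adj (Sum.inr i) (Sum.inl (f i)))).trans
        (hbase (f i) t')
    · exact ((Adj.reachable (by simp : (attachLeaves Tg f).Adj (Sum.inr i) (Sum.inl (f i)))).trans
        (hbase (f i) (f j))).trans (Adj.reachable (by simp : (attachLeaves Tg f).Adj (Sum.inr j) (Sum.inl (f j)))).symm
  · -- acyclic
    classical
    intro v c hc
    have hnoinr : ∀ i : W, Sum.inr i ∉ c.support := by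
      intro i hi
      have hcyc : (c.rotate _ hi).IsCycle := hc.rotate hi
      obtain ⟨w0, h0, q, heq⟩ := (Walk.not_nil_iff).1 hcyc.not_nil
      rw [heq] at hcyc
      have hw0 : w0 = Sum.inl (f i) := by
        cases w0 with
        | inl t => rw [show t = f i from h0]
        | inr j => exact absurd h0 (by simp)
      -- last edge of q is s(inl (f i), inr i)
      have hqlen : q.length ≠ 0 := by
        have := hcyc.three_le_length
        simp only [Walk.length_cons] at this
        omega
      have hqnil : ¬ q.Nil := by
        intro hn
        exact hqlen (Walk.nil_iff_length_eq.1 hn)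
      obtain ⟨w1, h1, q1, hq1⟩ := (Walk.not_nil_iff).1 (by
        rw [Walk.nil_iff_length_eq, Walk.length_reverse]
        exact hqlen : ¬ q.reverse.Nil)
      have hw1 : w1 = Sum.inl (f i) := by
        cases w1 with
        | inl t => rw [show t = f i from h1]
        | inr j => exact absurd h1 (by simp)
      have hlast : s(Sum.inr i, w1) ∈ q.edges := by
        have : s(Sum.inr i, w1) ∈ q.reverse.edges := by
          rw [hq1]; simp
        rwa [Walk.edges_reverse, List.mem_reverse] at this
      have hmain := (Walk.cons_isCycle_iff q h0).1 hcyc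
      rw [hw1.trans hw0.symm] at hlast
      exact hmain.2 hlast
    have hall : ∀ v' ∈ c.support, ∃ t, v' = Sum.inl t := by
      intro v' hv'
      cases v' with
      | inl t => exact ⟨t, rfl⟩
      | inr i => exact absurd hv' (hnoinr i)
    obtain ⟨x, y, hx, hy, w', hmap⟩ := exists_lower c hall
    have hxy : x = y := Sum.inl.inj (hx ▸ hy)
    subst hxy
    have : (w'.map (inlHom Tg f)).IsCycle := by
      rw [hmap]
      exact (Walk.isCycle_copy c hx).2 hc
    exact hT.IsAcyclic w' ((Walk.map_isCycle_iff_of_injective (fun a b => Sum.inl.inj)).1 this)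

end Attach

end TW

open SimpleGraph in
/-- if the primal graph of `φ` has treewidth `≤ w` and every clause of
`φ` is nonempty, then the primal graph of `C(φ)` (obtained by adding a fresh control
variable to each clause) has treewidth at most `w + 1`. -/
theorem primal_treewidth_control {X : Type} {m : ℕ} (cl : Fin m → Finset X)
    (hne : ∀ i, (cl i).Nonempty) (w : ℕ)
    (hφ : HasTreewidthAtMost (primalGraph cl) w) :
    HasTreewidthAtMost (primalGraphC cl) (w + 1) := by
  classical
  obtain ⟨ι, Tg, β, hT, hvert, hedge, hconn, hcard⟩ := hφ
  have hcov : ∀ i : Fin m, ∃ t, ∀ b ∈ cl i, b ∈ β t := by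
    intro i
    apply clique_bag Tg hT β hconn (cl i)
    intro a ha b hb
    by_cases hab : a = b
    · subst hab; obtain ⟨t, ht⟩ := hvert a; exact ⟨t, ht, ht⟩
    · exact hedge a b ⟨hab, i, ha, hb⟩
  choose f hf using hcov
  set β' : ι ⊕ Fin m → Finset (X ⊕ Fin m) :=
    Sum.elim (fun t => (β t).image Sum.inl)
      (fun i => insert (Sum.inr i) ((cl i).image Sum.inl)) with hβ'
  have hβl : ∀ (a : X) (t : ι), Sum.inl a ∈ β' (Sum.inl t) ↔ a ∈ β t := by
    intro a t; simp [hβ', Sum.inl_injective.eq_iff]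
  have hβlr : ∀ (a : X) (i : Fin m), Sum.inl a ∈ β' (Sum.inr i) ↔ a ∈ cl i := by
    intro a i; simp [hβ']
  have hβrl : ∀ (i : Fin m) (t : ι), Sum.inr i ∉ β' (Sum.inl t) := by
    intro i t; simp [hβ']
  have hβrr : ∀ (i j : Fin m), Sum.inr i ∈ β' (Sum.inr j) ↔ i = j := by
    intro i j; simp [hβ', eq_comm]
  refine ⟨ι ⊕ Fin m, attachLeaves Tg f, β', attachLeaves_isTree hT, ?_, ?_, ?_, ?_⟩
  · -- every vertex in some bag
    rintro (a | i)
    · obtain ⟨t, ht⟩ := hvert a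
      exact ⟨Sum.inl t, (hβl a t).2 ht⟩
    · exact ⟨Sum.inr i, (hβrr i i).2 rfl⟩
  · -- edges covered
    rintro (a | j) (b | k) ⟨hne', i, hp, hq⟩
    · exact ⟨Sum.inl (f i), (hβl a _).2 (hf i a hp), (hβl b _).2 (hf i b hq)⟩
    · obtain rfl : k = i := hq
      exact ⟨Sum.inr k, (hβlr a k).2 hp, (hβrr k k).2 rfl⟩
    · obtain rfl : j = i := hp
      exact ⟨Sum.inr j, (hβrr j j).2 rfl, (hβlr b j).2 hq⟩
    · obtain rfl : j = i := hp
      obtain rfl : k = j := hq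
      exact absurd rfl hne'
  · -- connectivity of the bags of each vertex
    rintro (a | i)
    · set S : Set (ι ⊕ Fin m) := {t' | Sum.inl a ∈ β' t'} with hS
      have hbase : ∀ (t t' : ι) (ht : a ∈ β t) (ht' : a ∈ β t'),
          ((attachLeaves Tg f).induce S).Reachable ⟨Sum.inl t, (hβl a t).2 ht⟩
            ⟨Sum.inl t', (hβl a t').2 ht'⟩ := by
        intro t t' ht ht'
        obtain ⟨wtg, hw⟩ :=
          walk_of_induce_reachable ((hconn a).preconnected ⟨t, ht⟩ ⟨t', ht'⟩)
        have hsup : ∀ v ∈ (wtg.map (inlHom Tg f)).support, v ∈ S := by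
          intro v hv
          rw [SimpleGraph.Walk.support_map] at hv
          obtain ⟨u, hu, rfl⟩ := List.mem_map.1 hv
          exact (hβl a u).2 (hw u hu)
        exact reachable_induce_of_walk (wtg.map (inlHom Tg f)) hsup
      have hstep : ∀ (i : Fin m) (hi : a ∈ cl i),
          ((attachLeaves Tg f).induce S).Reachable ⟨Sum.inr i, (hβlr a i).2 hi⟩
            ⟨Sum.inl (f i), (hβl a (f i)).2 (hf i a hi)⟩ := by
        intro i hi
        exact SimpleGraph.Adj.reachable (by simp [SimpleGraph.comap_adj])
      obtain ⟨t0, ht0⟩ := hvert a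
      haveI : Nonempty S := ⟨⟨Sum.inl t0, (hβl a t0).2 ht0⟩⟩
      refine ⟨?_⟩
      rintro ⟨(t | i), hu⟩ ⟨(t' | j), hv⟩
      · exact hbase t t' ((hβl a t).1 hu) ((hβl a t').1 hv)
      · exact (hbase t (f j) ((hβl a t).1 hu) (hf j a ((hβlr a j).1 hv))).trans
          (hstep j ((hβlr a j).1 hv)).symm
      · exact (hstep i ((hβlr a i).1 hu)).trans
          (hbase (f i) t' (hf i a ((hβlr a i).1 hu)) ((hβl a t').1 hv))
      · exact ((hstep i ((hβlr a i).1 hu)).trans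
          (hbase (f i) (f j) (hf i a ((hβlr a i).1 hu)) (hf j a ((hβlr a j).1 hv)))).trans
          (hstep j ((hβlr a j).1 hv)).symm
    · set S : Set (ι ⊕ Fin m) := {t' | Sum.inr i ∈ β' t'} with hS
      have hSi : ∀ u, u ∈ S → u = Sum.inr i := by
        rintro (t | j) hu
        · exact absurd hu (hβrl i t)
        · exact congrArg Sum.inr ((hβrr i j).1 hu).symm
      haveI : Nonempty S := ⟨⟨Sum.inr i, (hβrr i i).2 rfl⟩⟩
      refine ⟨?_⟩
      rintro ⟨u, hu⟩ ⟨v, hv⟩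
      have : (⟨u, hu⟩ : S) = ⟨v, hv⟩ := Subtype.ext ((hSi u hu).trans (hSi v hv).symm)
      rw [this]
  · -- bag sizes
    rintro (t | i)
    · calc ((β t).image Sum.inl).card ≤ (β t).card := Finset.card_image_le
        _ ≤ w + 1 := hcard t
        _ ≤ w + 1 + 1 := by omega
    · calc (insert (Sum.inr i : X ⊕ Fin m) ((cl i).image Sum.inl)).card
          ≤ ((cl i).image Sum.inl).card + 1 := Finset.card_insert_le _ _
        _ ≤ (cl i).card + 1 := by
            exact Nat.add_le_add_right Finset.card_image_le 1
        _ ≤ (β (f i)).card + 1 := by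
            exact Nat.add_le_add_right (Finset.card_le_card (fun b hb => hf i b hb)) 1
        _ ≤ w + 1 + 1 := Nat.add_le_add_right (hcard (f i)) 1
end
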